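/- Let U be a finite linearly ordered set and let x, y be nonempty subsets of U. If π is a permutation of U chosen uniformly at random, then the probability that min_{e ∈ x} π(e) = min_{e ∈ y} π(e) equals |x ∩ y| / |x ∪ y|, the Jaccard similarity of x and y. -/
import Mathlib

open Finset

namespace MinhashAux

variable {U : Type*} [Fintype U] [LinearOrder U]

/-- The set of permutations for which `e` is the argmin over `s`. -/
def B (s : Finset U) (hs : s.Nonempty) (e : U) : Finset (Equiv.Perm U) :=
  univ.filter fun π => π e = (s.image π).min' (hs.image _)

lemma swap_image {s : Finset U} {e e' : U} (he : e ∈ s) (he' : e' ∈ s) :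
    s.image (Equiv.swap e e') = s := by
  apply Finset.eq_of_subset_of_card_le
  · intro a ha
    simp only [mem_image] at ha
    obtain ⟨b, hb, rfl⟩ := ha
    rcases eq_or_ne b e with rfl | hbe
    · simpa [Equiv.swap_apply_left] using he'
    rcases eq_or_ne b e' with rfl | hbe'
    · simpa [Equiv.swap_apply_right] using he
    · rwa [Equiv.swap_apply_of_ne_of_ne hbe hbe']
  · rw [Finset.card_image_of_injective _ (Equiv.injective _)]

lemma min'_congr {t t' : Finset U} (h : t.Nonempty) (h' : t'.Nonempty) (e : t = t') :
    t.min' h = t'.min' h' := by subst e; rfl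

lemma card_B_eq {s : Finset U} (hs : s.Nonempty) {e e' : U} (he : e ∈ s) (he' : e' ∈ s) :
    (B s hs e).card = (B s hs e').card := by
  have key : ∀ a b : U, a ∈ s → b ∈ s → ∀ π : Equiv.Perm U,
      π ∈ B s hs a → π * Equiv.swap a b ∈ B s hs b := by
    intro a b ha hb π hπ
    simp only [B, mem_filter, mem_univ, true_and] at hπ ⊢
    have himg : s.image (π * Equiv.swap a b) = s.image π := by
      have : s.image ⇑(π * Equiv.swap a b) = (s.image (Equiv.swap a b)).image π := by
        rw [Finset.image_image]; rfl
      rw [this, swap_image ha hb]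
    have hval : (π * Equiv.swap a b) b = π a := by
      simp [Equiv.Perm.mul_apply, Equiv.swap_apply_right]
    rw [hval, hπ]
    exact min'_congr _ _ himg.symm
  apply Finset.card_nbij' (fun π => π * Equiv.swap e e') (fun π => π * Equiv.swap e e')
  · exact fun π hπ => key e e' he he' π hπ
  · intro π hπ
    have := key e' e he' he π hπ
    rwa [Equiv.swap_comm e' e] at this
  · intro π hπ; simp [mul_assoc, Equiv.swap_mul_self]
  · intro π hπ; simp [mul_assoc, Equiv.swap_mul_self]

lemma disjoint_B {s : Finset U} (hs : s.Nonempty) :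
    ∀ a ∈ s, ∀ b ∈ s, a ≠ b → Disjoint (B s hs a) (B s hs b) := by
  intro a ha b hb hab
  rw [Finset.disjoint_left]
  intro π hπa hπb
  simp only [B, mem_filter, mem_univ, true_and] at hπa hπb
  exact hab (π.injective (hπa.trans hπb.symm))

lemma biUnion_B {s : Finset U} (hs : s.Nonempty) :
    s.biUnion (B s hs) = univ := by
  apply Finset.eq_univ_of_forall
  intro π
  rw [Finset.mem_biUnion]
  have hm := (s.image π).min'_mem (hs.image _)
  rw [mem_image] at hm
  obtain ⟨e, he, hme⟩ := hm
  exact ⟨e, he, by simp [B, hme]⟩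

lemma sum_card_B {s : Finset U} (hs : s.Nonempty) :
    ∑ e ∈ s, (B s hs e).card = Fintype.card (Equiv.Perm U) := by
  rw [← Finset.card_biUnion (disjoint_B hs), biUnion_B hs, Finset.card_univ]

end MinhashAux

open MinhashAux in
theorem minhash_collision_probability {U : Type*} [Fintype U] [LinearOrder U]
    (x y : Finset U) (hx : x.Nonempty) (hy : y.Nonempty) :
    ((Finset.univ.filter fun π : Equiv.Perm U =>
        (x.image π).min' (hx.image _) = (y.image π).min' (hy.image _)).card : ℝ) /
      (Fintype.card (Equiv.Perm U) : ℝ)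
      = ((x ∩ y).card : ℝ) / ((x ∪ y).card : ℝ) := by
  classical
  have hs : (x ∪ y).Nonempty := hx.mono Finset.subset_union_left
  -- The main event is the biUnion over x ∩ y of the argmin events.
  have hmain : (Finset.univ.filter fun π : Equiv.Perm U =>
        (x.image π).min' (hx.image _) = (y.image π).min' (hy.image _))
      = (x ∩ y).biUnion (B (x ∪ y) hs) := by
    ext π
    simp only [mem_filter, mem_univ, true_and, mem_biUnion, B, mem_inter]
    constructor
    · rintro heq
      have hmx := (x.image π).min'_mem (hx.image _)
      rw [mem_image] at hmx
      obtain ⟨a, hax, hma⟩ := hmx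
      have hay : a ∈ y := by
        have hmy := (y.image π).min'_mem (hy.image _)
        rw [mem_image] at hmy
        obtain ⟨b, hby, hmb⟩ := hmy
        have : π a = π b := by rw [hma, hmb, heq]
        rwa [π.injective this]
      refine ⟨a, ⟨hax, hay⟩, ?_⟩
      apply le_antisymm
      · -- π a ≤ min' of union image
        have hmem : ((x ∪ y).image π).min' (hs.image _) ∈ x.image π ∪ y.image π := by
          rw [← Finset.image_union]
          exact Finset.min'_mem _ _
        rw [Finset.mem_union] at hmem
        rcases hmem with h | h
        · rw [hma]; exact Finset.min'_le _ _ h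
        · rw [hma, heq]; exact Finset.min'_le _ _ h
      · apply Finset.min'_le
        exact Finset.mem_image_of_mem _ (Finset.mem_union_left _ hax)
    · rintro ⟨e, ⟨hex, hey⟩, he⟩
      have hmin : ∀ (z : Finset U) (hz : z.Nonempty), e ∈ z → z ⊆ x ∪ y →
          (z.image π).min' (hz.image _) = π e := by
        intro z hz hez hzsub
        apply le_antisymm
        · exact Finset.min'_le _ _ (Finset.mem_image_of_mem _ hez)
        · rw [he]
          apply Finset.min'_le
          have := (z.image π).min'_mem (hz.image _)
          exact Finset.image_subset_image hzsub this
      rw [hmin x hx hex Finset.subset_union_left,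
        hmin y hy hey Finset.subset_union_right]
  -- Cardinality computations.
  obtain ⟨e₀, he₀⟩ := id hs
  set c := (B (x ∪ y) hs e₀).card with hc
  have hcardB : ∀ e ∈ x ∪ y, (B (x ∪ y) hs e).card = c := fun e he =>
    card_B_eq hs he he₀
  have htotal : Fintype.card (Equiv.Perm U) = (x ∪ y).card * c := by
    rw [← sum_card_B hs, Finset.sum_congr rfl hcardB, Finset.sum_const, smul_eq_mul]
  have hmaincard : (Finset.univ.filter fun π : Equiv.Perm U =>
        (x.image π).min' (hx.image _) = (y.image π).min' (hy.image _)).card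
      = (x ∩ y).card * c := by
    rw [hmain, Finset.card_biUnion (fun a ha b hb hab =>
      disjoint_B hs a (Finset.inter_subset_union ha) b (Finset.inter_subset_union hb) hab),
      Finset.sum_congr rfl (fun e he => hcardB e (Finset.inter_subset_union he)),
      Finset.sum_const, smul_eq_mul]
  have hcne : (c : ℝ) ≠ 0 := by
    have hpos : 0 < Fintype.card (Equiv.Perm U) := Fintype.card_pos
    rw [htotal] at hpos
    have hc0 : c ≠ 0 := by
      intro h0
      rw [h0, mul_zero] at hpos
      exact absurd hpos (lt_irrefl 0)
    exact_mod_cast hc0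
  rw [hmaincard, htotal]
  push_cast
  rw [mul_div_mul_right _ _ hcne]
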